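/- Under the injective homomorphism φ: F⟨x_1,...,x_n⟩ → F⟨x,y⟩ given by x_i ↦ u_i + ū_i for distinct minimally balanced words u_i, a polynomial f ∈ F⟨x_1,...,x_n⟩ is irreducible if and only if φ(f) is irreducible in F⟨x,y⟩ (for f of positive degree). -/

import Mathlib

/-- The imbalance of a word over `{x,y}` (with `x = true`, `y = false`):
number of `x`'s minus number of `y`'s. -/
def imbL (m : List Bool) : ℤ := (m.count true : ℤ) - (m.count false : ℤ)

/-- A nonempty word over `{x,y}` is minimally balanced if its imbalance is `0`
and every nonempty proper prefix has strictly positive imbalance. -/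
def MinBal (m : List Bool) : Prop :=
  m ≠ [] ∧ imbL m = 0 ∧ ∀ p : List Bool, p <+: m → p ≠ [] → p ≠ m → 0 < imbL p
noncomputable section

/-- The degree of a noncommutative polynomial in the free algebra
`F⟨X⟩ = MonoidAlgebra F (FreeMonoid X)`. -/
def ncDeg {F : Type*} [Field F] {X : Type*} (f : MonoidAlgebra F (FreeMonoid X)) : ℕ :=
  f.coeff.support.sup fun m => m.length

/-- The algebra homomorphism `F⟨X⟩ → F⟨x,y⟩` determined by its values `v i`
on the variables, extended multiplicatively to monomials and linearly. -/
def phiGen {F : Type*} [Field F] {X : Type*}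
    (v : X → MonoidAlgebra F (FreeMonoid Bool)) :
    MonoidAlgebra F (FreeMonoid X) →ₐ[F] MonoidAlgebra F (FreeMonoid Bool) :=
  MonoidAlgebra.lift F _ (FreeMonoid X) (FreeMonoid.lift v)

/-- A noncommutative polynomial of positive degree is irreducible if it admits
no factorization into two factors of positive degree. -/
def NCIrreducible {F : Type*} [Field F] {X : Type*}
    (f : MonoidAlgebra F (FreeMonoid X)) : Prop :=
  ¬ ∃ g h : MonoidAlgebra F (FreeMonoid X), 0 < ncDeg g ∧ 0 < ncDeg h ∧ f = g * h

instance instCoeFunMonoidAlgebraNC {F M : Type*} [Semiring F] :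
    CoeFun (MonoidAlgebra F M) (fun _ => M → F) := ⟨fun x => x.coeff⟩

namespace NCAux

lemma imb_nil : imbL [] = 0 := by simp [imbL]

lemma imb_cons (b : Bool) (t : List Bool) :
    imbL (b :: t) = (if b then 1 else -1) + imbL t := by
  cases b <;> simp [imbL, List.count_cons] <;> ring

lemma imb_append (a b : List Bool) : imbL (a ++ b) = imbL a + imbL b := by
  simp [imbL, List.count_append]; ring

lemma imb_map_not (w : List Bool) : imbL (w.map not) = - imbL w := by
  induction w with
  | nil => simp [imbL]
  | cons c t ih => cases c <;> simp [imb_cons, ih] <;> ring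

lemma mb_ne_nil {m : List Bool} (h : MinBal m) : m ≠ [] := h.1
lemma mb_imb {m : List Bool} (h : MinBal m) : imbL m = 0 := h.2.1

lemma mb_prefix_nonneg {m p : List Bool} (h : MinBal m) (hp : p <+: m) : 0 ≤ imbL p := by
  by_cases h1 : p = []
  · simp [h1, imb_nil]
  by_cases h2 : p = m
  · simp [h2, h.2.1]
  · exact le_of_lt (h.2.2 p hp h1 h2)

lemma mb_head {m : List Bool} (h : MinBal m) : ∃ t, m = true :: t := by
  obtain ⟨c, t, rfl⟩ : ∃ c t, m = c :: t := by
    cases m with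
    | nil => exact absurd rfl h.1
    | cons c t => exact ⟨c, t, rfl⟩
  cases c with
  | true => exact ⟨t, rfl⟩
  | false =>
    exfalso
    by_cases h2 : ([false] : List Bool) = false :: t
    · have := h.2.1
      rw [← h2] at this
      simp [imbL] at this
    · have := h.2.2 [false] ⟨t, rfl⟩ (by simp) h2
      rw [imb_cons, imb_nil] at this
      simp at this

/-- `Blk v`: `v` is a minimally balanced word or the letter-swap of one. -/
def Blk (v : List Bool) : Prop := MinBal v ∨ MinBal (v.map not)

lemma blk_ne_nil {v : List Bool} (h : Blk v) : v ≠ [] := by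
  rcases h with h | h
  · exact h.1
  · intro hv; rw [hv] at h; exact h.1 rfl

lemma blk_imb {v : List Bool} (h : Blk v) : imbL v = 0 := by
  rcases h with h | h
  · exact h.2.1
  · have := h.2.1; rw [imb_map_not] at this; omega

lemma blk_prefix_ne {v p : List Bool} (h : Blk v) (hp : p <+: v) (h1 : p ≠ [])
    (h2 : p ≠ v) : imbL p ≠ 0 := by
  rcases h with h | h
  · have := h.2.2 p hp h1 h2; omega
  · have hp' : p.map not <+: v.map not := hp.map not
    have h1' : p.map not ≠ [] := by simpa using h1
    have h2' : p.map not ≠ v.map not := by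
      intro he; exact h2 (List.map_injective_iff.2 (fun a b hab => by cases a <;> cases b <;> simp_all) he)
    have := h.2.2 _ hp' h1' h2'
    rw [imb_map_not] at this; omega

/-- Two blocks that start the same word are equal. -/
lemma blk_cancel {v v' t t' : List Bool} (hv : Blk v) (hv' : Blk v')
    (h : v ++ t = v' ++ t') : v = v' := by
  rcases le_total v.length v'.length with hl | hl
  · have hpref : v <+: v' := by
      have h1 : v <+: v' ++ t' := h ▸ ⟨t, rfl⟩
      exact List.prefix_of_prefix_length_le h1 ⟨t', rfl⟩ hl
    by_contra hne
    exact blk_prefix_ne hv' hpref (blk_ne_nil hv) hne (blk_imb hv)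
  · have hpref : v' <+: v := by
      have h1 : v' <+: v ++ t := h ▸ ⟨t', rfl⟩
      exact List.prefix_of_prefix_length_le h1 ⟨t, rfl⟩ hl
    by_contra hne
    exact blk_prefix_ne hv hpref (blk_ne_nil hv') (fun he => hne he.symm) (blk_imb hv')

end NCAux

namespace NCAux

variable {n : ℕ} (u : Fin n → List Bool)

/-- `IsS u m w` : the word `w` over `{x,y}` is a concatenation of blocks
`u i` or `(u i).map not` following the sequence of indices `m`. -/
def IsS : List (Fin n) → List Bool → Prop
  | [], w => w = []
  | i :: t, w => ∃ w', IsS t w' ∧ (w = u i ++ w' ∨ w = (u i).map not ++ w')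

variable (hmb : ∀ i, MinBal (u i))

include hmb

lemma blk_u (i : Fin n) : Blk (u i) := Or.inl (hmb i)

lemma blk_ub (i : Fin n) : Blk ((u i).map not) := by
  right
  have : ((u i).map not).map not = u i := by
    simp [List.map_map, Function.comp_def, Bool.not_not]
  rw [this]; exact hmb i

lemma u_head (i : Fin n) : ∃ t, u i = true :: t := mb_head (hmb i)

lemma ub_head (i : Fin n) : ∃ t, (u i).map not = false :: t := by
  obtain ⟨t, ht⟩ := u_head u hmb i
  exact ⟨t.map not, by simp [ht]⟩

/-- Which block it is can be recovered from the block itself. -/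
lemma blk_inj (hinj : Function.Injective u) {i j : Fin n} {a b : Bool} 
    (h : (if a then u i else (u i).map not) = (if b then u j else (u j).map not)) :
    i = j ∧ a = b := by
  obtain ⟨ti, hti⟩ := u_head u hmb i
  obtain ⟨tj, htj⟩ := u_head u hmb j
  obtain ⟨ti', hti'⟩ := ub_head u hmb i
  obtain ⟨tj', htj'⟩ := ub_head u hmb j
  cases a <;> cases b <;> simp at h
  · exact ⟨hinj (by
      have := congrArg (List.map not) h
      simpa [List.map_map, Function.comp_def, Bool.not_not] using this), rfl⟩
  · rw [hti', htj] at h; simp at h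
  · rw [hti, htj'] at h; simp at h
  · exact ⟨hinj h, rfl⟩

omit hmb in
lemma isS_nil_iff (w : List Bool) : IsS u [] w ↔ w = [] := Iff.rfl

/-- Uniqueness of the index sequence. -/
lemma isS_unique (hinj : Function.Injective u) : ∀ {m m' : List (Fin n)} {w : List Bool},
    IsS u m w → IsS u m' w → m = m' := by
  intro m
  induction m with
  | nil =>
    intro m' w hm hm'
    rw [isS_nil_iff] at hm
    subst hm
    cases m' with
    | nil => rfl
    | cons j t' =>
      obtain ⟨w', _, h | h⟩ := hm' <;>
      · exfalso
        have hne : u j ≠ [] := (hmb j).1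
        cases hj : u j with
        | nil => exact hne hj
        | cons c cs => rw [hj] at h; simp at h
  | cons i t ih =>
    intro m' w hm hm'
    cases m' with
    | nil =>
      rw [isS_nil_iff] at hm'
      subst hm'
      obtain ⟨w', _, h | h⟩ := hm <;>
      · exfalso
        have hne : u i ≠ [] := (hmb i).1
        cases hj : u i with
        | nil => exact hne hj
        | cons c cs => rw [hj] at h; simp at h
    | cons j t' =>
      obtain ⟨w1, h1, hc1⟩ := hm
      obtain ⟨w2, h2, hc2⟩ := hm'
      -- blocks at the front agree
      have key : ∀ (a b : Bool), w = (if a then u i else (u i).map not) ++ w1 →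
          w = (if b then u j else (u j).map not) ++ w2 → i = j ∧ w1 = w2 := by
        intro a b ha hb
        have heq : (if a then u i else (u i).map not) ++ w1
            = (if b then u j else (u j).map not) ++ w2 := by rw [← ha, ← hb]
        have hblk : (if a then u i else (u i).map not) = (if b then u j else (u j).map not) := by
          apply blk_cancel _ _ heq
          · cases a <;> simp [blk_u u hmb, blk_ub u hmb]
          · cases b <;> simp [blk_u u hmb, blk_ub u hmb]
        obtain ⟨hij, -⟩ := blk_inj u hmb hinj hblk
        refine ⟨hij, ?_⟩
        rw [hblk] at heq
        exact List.append_cancel_left heq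
      have : i = j ∧ w1 = w2 := by
        rcases hc1 with h | h <;> rcases hc2 with h' | h'
        · exact key true true (by simpa using h) (by simpa using h')
        · exact key true false (by simpa using h) (by simpa using h')
        · exact key false true (by simpa using h) (by simpa using h')
        · exact key false false (by simpa using h) (by simpa using h')
      obtain ⟨hij, hw⟩ := this
      subst hij
      rw [hw] at h1
      rw [ih h1 h2]

omit hmb in
/-- Concatenation of signed words. -/
lemma isS_append : ∀ {m m' : List (Fin n)} {w w' : List Bool},
    IsS u m w → IsS u m' w' → IsS u (m ++ m') (w ++ w') := by
  intro m
  induction m with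
  | nil => intro m' w w' hm hm'; rw [isS_nil_iff] at hm; subst hm; simpa using hm'
  | cons i t ih =>
    intro m' w w' hm hm'
    obtain ⟨w1, h1, hc⟩ := hm
    refine ⟨w1 ++ w', ih h1 hm', ?_⟩
    rcases hc with h | h
    · left; rw [h, List.append_assoc]
    · right; rw [h, List.append_assoc]

lemma isS_imb : ∀ {m : List (Fin n)} {w : List Bool}, IsS u m w → imbL w = 0 := by
  intro m
  induction m with
  | nil => intro w hm; rw [isS_nil_iff] at hm; subst hm; exact imb_nil
  | cons i t ih =>
    intro w hm
    obtain ⟨w1, h1, hc⟩ := hm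
    have h2 := ih h1
    have h3 := (hmb i).2.1
    have h4 : imbL ((u i).map not) = - imbL (u i) := imb_map_not _
    rcases hc with h | h <;> rw [h, imb_append] <;> omega

omit hmb in
lemma isS_length : ∀ {m : List (Fin n)} {w : List Bool}, IsS u m w →
    w.length = (m.map fun i => (u i).length).sum := by
  intro m
  induction m with
  | nil => intro w hm; rw [isS_nil_iff] at hm; subst hm; simp
  | cons i t ih =>
    intro w hm
    obtain ⟨w1, h1, hc⟩ := hm
    rcases hc with h | h <;> rw [h] <;> simp [ih h1]

/-- Splitting of a signed word at a balanced cut point. -/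
lemma isS_split : ∀ {m : List (Fin n)} {w p : List Bool},
    IsS u m (w ++ p) → imbL w = 0 →
    ∃ m₁ m₂, m = m₁ ++ m₂ ∧ IsS u m₁ w ∧ IsS u m₂ p := by
  intro m
  induction m with
  | nil =>
    intro w p hm _
    rw [isS_nil_iff] at hm
    have hw : w = [] := by cases w with | nil => rfl | cons c t => simp at hm
    have hp : p = [] := by rw [hw] at hm; simpa using hm
    exact ⟨[], [], rfl, by simp [isS_nil_iff, hw], by simp [isS_nil_iff, hp]⟩
  | cons i t ih =>
    intro w p hm hw
    by_cases hwnil : w = []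
    · exact ⟨[], i :: t, rfl, by simp [isS_nil_iff, hwnil], by rw [hwnil] at hm; simpa using hm⟩
    obtain ⟨w1, h1, hc⟩ := hm
    -- blk is the leading block
    have main : ∀ (blk : List Bool), Blk blk → w ++ p = blk ++ w1 →
        ∃ w2, w = blk ++ w2 ∧ w1 = w2 ++ p ∧ imbL w2 = 0 := by
      intro blk hblk heq
      have hlen : blk.length ≤ w.length := by
        by_contra hlt
        push_neg at hlt
        have hpref : w <+: blk := by
          have h1' : w <+: blk ++ w1 := heq ▸ ⟨p, rfl⟩
          exact List.prefix_of_prefix_length_le h1' ⟨w1, rfl⟩ (le_of_lt hlt)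
        have hne : w ≠ blk := by
          intro he; rw [he] at hlt; omega
        exact blk_prefix_ne hblk hpref hwnil hne hw
      have hpref : blk <+: w := by
        have h1' : blk <+: w ++ p := heq.symm ▸ ⟨w1, rfl⟩
        exact List.prefix_of_prefix_length_le h1' ⟨p, rfl⟩ hlen
      obtain ⟨w2, hw2⟩ := hpref
      refine ⟨w2, hw2.symm, ?_, ?_⟩
      · rw [← hw2, List.append_assoc] at heq
        exact (List.append_cancel_left heq).symm
      · have := hw
        rw [← hw2, imb_append, blk_imb hblk] at this
        omega
    rcases hc with h | h
    · obtain ⟨w2, hwa, hwb, hw2⟩ := main (u i) (blk_u u hmb i) h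
      rw [hwb] at h1
      obtain ⟨m₁, m₂, hm12, hs1, hs2⟩ := ih h1 hw2
      exact ⟨i :: m₁, m₂, by rw [hm12]; rfl, ⟨w2, hs1, Or.inl hwa⟩, hs2⟩
    · obtain ⟨w2, hwa, hwb, hw2⟩ := main ((u i).map not) (blk_ub u hmb i) h
      rw [hwb] at h1
      obtain ⟨m₁, m₂, hm12, hs1, hs2⟩ := ih h1 hw2
      exact ⟨i :: m₁, m₂, by rw [hm12]; rfl, ⟨w2, hs1, Or.inr hwa⟩, hs2⟩

/-- The all-positive representative word of a monomial. -/
def posW (m : List (Fin n)) : List Bool := (m.map u).flatten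

/-- The all-negative representative word of a monomial. -/
def negW (m : List (Fin n)) : List Bool := (m.map fun i => (u i).map not).flatten

omit hmb in
lemma isS_posW (m : List (Fin n)) : IsS u m (posW u m) := by
  induction m with
  | nil => simp [posW, isS_nil_iff]
  | cons i t ih => exact ⟨posW u t, ih, Or.inl (by simp [posW])⟩

omit hmb in
lemma isS_negW (m : List (Fin n)) : IsS u m (negW u m) := by
  induction m with
  | nil => simp [negW, isS_nil_iff]
  | cons i t ih => exact ⟨negW u t, ih, Or.inr (by simp [negW])⟩

lemma posW_inj (hinj : Function.Injective u) : Function.Injective (posW u) := by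
  intro m m' h
  exact isS_unique u hmb hinj (isS_posW u m) (h ▸ isS_posW u m')

/-- Prefixes of an all-positive word have nonnegative imbalance. -/
lemma posW_prefix_nonneg : ∀ (m : List (Fin n)) (p : List Bool),
    p <+: posW u m → 0 ≤ imbL p := by
  intro m
  induction m with
  | nil => intro p hp; simp [posW] at hp; simp [hp, imb_nil]
  | cons i t ih =>
    intro p hp
    have : posW u (i :: t) = u i ++ posW u t := by simp [posW]
    rw [this] at hp
    rcases le_total p.length (u i).length with hl | hl
    · exact mb_prefix_nonneg (hmb i) (List.prefix_of_prefix_length_le hp ⟨posW u t, rfl⟩ hl)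
    · have h2 : u i <+: p := List.prefix_of_prefix_length_le ⟨posW u t, rfl⟩ hp hl
      obtain ⟨p2, rfl⟩ := h2
      have : p2 <+: posW u t := (List.prefix_append_right_inj (u i)).1 hp
      have := ih p2 this
      rw [imb_append, (hmb i).2.1]
      omega

lemma negW_prefix_nonpos : ∀ (m : List (Fin n)) (p : List Bool),
    p <+: negW u m → imbL p ≤ 0 := by
  intro m
  induction m with
  | nil => intro p hp; simp [negW] at hp; simp [hp, imb_nil]
  | cons i t ih =>
    intro p hp
    have : negW u (i :: t) = (u i).map not ++ negW u t := by simp [negW]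
    rw [this] at hp
    rcases le_total p.length ((u i).map not).length with hl | hl
    · have hpp : p <+: (u i).map not :=
        List.prefix_of_prefix_length_le hp ⟨negW u t, rfl⟩ hl
      obtain ⟨q, hq⟩ := hpp
      have : p.map not <+: u i := by
        refine ⟨q.map not, ?_⟩
        have := congrArg (List.map not) hq
        simpa [List.map_map, Function.comp_def, Bool.not_not] using this
      have := mb_prefix_nonneg (hmb i) this
      rw [imb_map_not] at this
      omega
    · have h2 : (u i).map not <+: p := List.prefix_of_prefix_length_le ⟨negW u t, rfl⟩ hp hl
      obtain ⟨p2, rfl⟩ := h2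
      have : p2 <+: negW u t := (List.prefix_append_right_inj _).1 hp
      have := ih p2 this
      rw [imb_append, imb_map_not, (hmb i).2.1]
      omega

end NCAux

namespace NCAux

/-- Binary value of a word: `1` followed by the bits (`true = 1`). Encodes the
degree-lexicographic order on words. -/
def vfold (m : ℕ) (w : List Bool) : ℕ := w.foldl (fun a b => 2 * a + (if b then 1 else 0)) m

def val2 (w : List Bool) : ℕ := vfold 1 w

def bits (w : List Bool) : ℕ := vfold 0 w

lemma vfold_append (m : ℕ) (a b : List Bool) :
    vfold m (a ++ b) = vfold (vfold m a) b := List.foldl_append ..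

lemma vfold_eq (w : List Bool) : ∀ m, vfold m w = m * 2 ^ w.length + bits w := by
  induction w with
  | nil => intro m; simp [vfold, bits]
  | cons c t ih =>
    intro m
    have h1 : vfold m (c :: t) = vfold (2 * m + (if c then 1 else 0)) t := rfl
    have h2 : bits (c :: t) = vfold ((if c then 1 else 0)) t := by
      simp [bits, vfold]
    rw [h1, ih, h2, ih]
    cases c <;> simp [List.length_cons, pow_succ] <;> ring

lemma bits_lt (w : List Bool) : bits w < 2 ^ w.length := by
  induction w with
  | nil => simp [bits, vfold]
  | cons c t ih =>
    have h2 : bits (c :: t) = vfold ((if c then 1 else 0)) t := by simp [bits, vfold]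
    rw [h2, vfold_eq]
    have : (if c then 1 else 0) ≤ 1 := by cases c <;> simp
    have h3 : (2:ℕ) ^ (c :: t).length = 2 * 2 ^ t.length := by
      simp [List.length_cons, pow_succ]; ring
    rw [h3]
    nlinarith [pow_pos (by norm_num : (0:ℕ) < 2) t.length]

lemma val2_eq (w : List Bool) : val2 w = 2 ^ w.length + bits w := by
  rw [val2, vfold_eq]; ring_nf

lemma val2_lt_of_length {a b : List Bool} (h : a.length < b.length) : val2 a < val2 b := by
  rw [val2_eq, val2_eq]
  have h1 := bits_lt a
  have h2 : 2 ^ (a.length + 1) ≤ 2 ^ b.length := Nat.pow_le_pow_right (by norm_num) h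
  have h3 : (2:ℕ) ^ (a.length + 1) = 2 * 2 ^ a.length := by rw [pow_succ]; ring
  omega

lemma length_le_of_val2_le {a b : List Bool} (h : val2 a ≤ val2 b) : a.length ≤ b.length := by
  by_contra hc
  push_neg at hc
  exact absurd h (not_le.2 (val2_lt_of_length hc))

lemma val2_pos (a : List Bool) : 1 ≤ val2 a := by
  rw [val2_eq]
  have := Nat.one_le_two_pow (n := a.length)
  omega

lemma val2_append (a b : List Bool) : val2 (a ++ b) = val2 a * 2 ^ b.length + bits b := by
  rw [val2, vfold_append, vfold_eq]; rfl

lemma val2_append_right {a b : List Bool} (c : List Bool) (h : val2 a < val2 b) :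
    val2 (a ++ c) < val2 (b ++ c) := by
  rw [val2_append, val2_append]
  have : val2 a * 2 ^ c.length < val2 b * 2 ^ c.length :=
    Nat.mul_lt_mul_of_lt_of_le h (le_refl _) (pow_pos (by norm_num) _)
  omega

lemma val2_append_left {a b : List Bool} (c : List Bool) (h : val2 a < val2 b) :
    val2 (c ++ a) < val2 (c ++ b) := by
  rw [val2_append, val2_append]
  rcases lt_trichotomy a.length b.length with hl | hl | hl
  · have hba := bits_lt a
    have hbb := bits_lt b
    have hc := val2_pos c
    have h2 : 2 ^ (a.length + 1) ≤ 2 ^ b.length := Nat.pow_le_pow_right (by norm_num) hl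
    have h3 : (2:ℕ) ^ (a.length+1) = 2 * 2 ^ a.length := by rw [pow_succ]; ring
    nlinarith
  · have : bits a < bits b := by
      rw [val2_eq, val2_eq, hl] at h
      omega
    rw [hl]
    omega
  · exact absurd h (not_lt.2 (le_of_lt (val2_lt_of_length hl)))

lemma bits_inj : ∀ (a b : List Bool), a.length = b.length → bits a = bits b → a = b := by
  intro a
  induction a with
  | nil => intro b h _; cases b with | nil => rfl | cons c t => simp at h
  | cons c t ih =>
    intro b hl hb
    cases b with
    | nil => simp at hl
    | cons c' t' =>
      have hlen : t.length = t'.length := by simpa using hl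
      have e1 : bits (c :: t) = (if c then 1 else 0) * 2 ^ t.length + bits t := by
        show vfold _ _ = _
        have : vfold 0 (c :: t) = vfold ((if c then 1 else 0)) t := by simp [vfold]
        rw [this, vfold_eq]
      have e2 : bits (c' :: t') = (if c' then 1 else 0) * 2 ^ t'.length + bits t' := by
        show vfold _ _ = _
        have : vfold 0 (c' :: t') = vfold ((if c' then 1 else 0)) t' := by simp [vfold]
        rw [this, vfold_eq]
      rw [e1, e2, ← hlen] at hb
      have h1 := bits_lt t
      have h2 := bits_lt t'
      rw [← hlen] at h2
      have hcc : c = c' := by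
        by_contra hne
        cases c <;> cases c' <;> simp_all <;> omega
      subst hcc
      have : bits t = bits t' := by cases c <;> simp at hb <;> omega
      rw [ih t' hlen this]

lemma val2_inj : Function.Injective val2 := by
  intro a b h
  have h1 : a.length = b.length :=
    le_antisymm (length_le_of_val2_le (le_of_eq h)) (length_le_of_val2_le (le_of_eq h.symm))
  have h2 : bits a = bits b := by
    rw [val2_eq, val2_eq, h1] at h
    omega
  exact bits_inj a b h1 h2

/-- A word starting with `y` is smaller than an equally long word starting with `x`. -/
lemma val2_false_lt_true {t s : List Bool} (h : t.length = s.length) :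
    val2 (false :: t) < val2 (true :: s) := by
  have e1 : val2 (false :: t) = vfold 2 t := rfl
  have e2 : val2 (true :: s) = vfold 3 s := rfl
  rw [e1, e2, vfold_eq, vfold_eq, h]
  have h1 := bits_lt t
  rw [h] at h1
  omega

end NCAux

namespace NCAux

variable {n : ℕ} (u : Fin n → List Bool) (hmb : ∀ i, MinBal (u i))

include hmb

lemma val2_le_posW : ∀ {m : List (Fin n)} {w : List Bool},
    IsS u m w → val2 w ≤ val2 (posW u m) := by
  intro m
  induction m with
  | nil =>
    intro w hm; rw [isS_nil_iff] at hm; subst hm; simp [posW]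
  | cons i t ih =>
    intro w hm
    obtain ⟨w', h1, hc⟩ := hm
    have hP : posW u (i :: t) = u i ++ posW u t := by simp [posW]
    have hlen : w'.length = (posW u t).length := by
      rw [isS_length u h1, isS_length u (isS_posW u t)]
    rcases hc with h | h
    · subst h
      rw [hP]
      rcases lt_or_eq_of_le (ih h1) with hlt | heq
      · exact le_of_lt (val2_append_left _ hlt)
      · rw [val2_inj heq]
    · subst h
      rw [hP]
      obtain ⟨s₀, hs₀⟩ := mb_head (hmb i)
      have ht₀ : (u i).map not = false :: s₀.map not := by rw [hs₀]; simp
      have e1 : (u i).map not ++ w' = false :: (s₀.map not ++ w') := by rw [ht₀]; simp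
      have e2 : u i ++ posW u t = true :: (s₀ ++ posW u t) := by rw [hs₀]; simp
      rw [e1, e2]
      exact le_of_lt (val2_false_lt_true (by simp [hlen]))

lemma negW_le_val2 : ∀ {m : List (Fin n)} {w : List Bool},
    IsS u m w → val2 (negW u m) ≤ val2 w := by
  intro m
  induction m with
  | nil =>
    intro w hm; rw [isS_nil_iff] at hm; subst hm; simp [negW]
  | cons i t ih =>
    intro w hm
    obtain ⟨w', h1, hc⟩ := hm
    have hP : negW u (i :: t) = (u i).map not ++ negW u t := by simp [negW]
    have hlen : w'.length = (negW u t).length := by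
      rw [isS_length u h1, isS_length u (isS_negW u t)]
    obtain ⟨s₀, hs₀⟩ := mb_head (hmb i)
    rcases hc with h | h
    · subst h
      rw [hP]
      have e1 : (u i).map not ++ negW u t = false :: (s₀.map not ++ negW u t) := by
        rw [hs₀]; simp
      have e2 : u i ++ w' = true :: (s₀ ++ w') := by rw [hs₀]; simp
      rw [e1, e2]
      exact le_of_lt (val2_false_lt_true (by simp [hlen]))
    · subst h
      rw [hP]
      rcases lt_or_eq_of_le (ih h1) with hlt | heq
      · exact le_of_lt (val2_append_left _ hlt)
      · rw [val2_inj heq]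

end NCAux

namespace NCAux

open scoped Classical in
/-- Multiplying by a single monomial on the left shifts coefficients. -/
lemma single_mul_coeff {F : Type*} [Field F] (a : List Bool) (r : F)
    (Q : MonoidAlgebra F (FreeMonoid Bool)) (w : List Bool) :
    (MonoidAlgebra.single (FreeMonoid.ofList a) r * Q) (FreeMonoid.ofList w) =
      if a <+: w then r * Q (FreeMonoid.ofList (w.drop a.length)) else 0 := by
  by_cases h : a <+: w
  · rw [if_pos h]
    obtain ⟨t, ht⟩ := h
    have hdrop : w.drop a.length = t := by rw [← ht]; simp
    rw [hdrop]
    apply MonoidAlgebra.single_mul_apply_aux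
    intro c _
    constructor
    · intro hc
      have h2 : a ++ c.toList = w := by
        have := congrArg (fun z => FreeMonoid.toList z) hc
        simpa using this
      rw [← ht] at h2
      have h3 := List.append_cancel_left h2
      rw [← h3]
      exact (FreeMonoid.ofList_toList c).symm
    · intro hc
      rw [hc, ← FreeMonoid.ofList_append, ht]
  · rw [if_neg h, MonoidAlgebra.mul_apply]
    rw [MonoidAlgebra.coeff_single, Finsupp.sum_single_index]
    · rw [Finsupp.sum]
      apply Finset.sum_eq_zero
      intro b _
      rw [if_neg]
      intro hc
      apply h
      refine ⟨b.toList, ?_⟩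
      have := congrArg (fun z => FreeMonoid.toList z) hc
      simpa using this
    · rw [Finsupp.sum]
      apply Finset.sum_eq_zero
      intro b _
      split <;> simp

open scoped Classical in
/-- The coefficient of a product at a word is the sum over all splittings. -/
lemma mul_coeff_eq_sum {F : Type*} [Field F] (G H : MonoidAlgebra F (FreeMonoid Bool))
    (w : List Bool) :
    (G * H) (FreeMonoid.ofList w) =
      ∑ j ∈ Finset.range (w.length + 1),
        G (FreeMonoid.ofList (w.take j)) * H (FreeMonoid.ofList (w.drop j)) := by
  have inner : ∀ (a : FreeMonoid Bool) (ga : F),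
      (Finsupp.sum H.coeff fun b hb => if a * b = FreeMonoid.ofList w then ga * hb else 0) =
      if a.toList <+: w then ga * H (FreeMonoid.ofList (w.drop a.toList.length)) else 0 := by
    intro a ga
    by_cases hp : a.toList <+: w
    · rw [if_pos hp]
      obtain ⟨t, ht⟩ := hp
      have hdrop : w.drop a.toList.length = t := by rw [← ht]; simp
      rw [hdrop]
      have hkey : ∀ b : FreeMonoid Bool,
          (a * b = FreeMonoid.ofList w) ↔ b = FreeMonoid.ofList t := by
        intro b
        constructor
        · intro hc
          have h2 : a.toList ++ b.toList = w := by
            have := congrArg (fun z => FreeMonoid.toList z) hc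
            simpa using this
          rw [← ht] at h2
          have h3 := List.append_cancel_left h2
          rw [← h3]
          exact (FreeMonoid.ofList_toList b).symm
        · intro hc
          rw [hc, ← FreeMonoid.ofList_toList a, ← FreeMonoid.ofList_append, ht]
      rw [Finsupp.sum]
      rw [Finset.sum_congr rfl (fun b _ => by rw [if_congr (hkey b) rfl rfl])]
      rw [Finset.sum_ite_eq' H.coeff.support (FreeMonoid.ofList t) (fun b => ga * H b)]
      by_cases hmem : FreeMonoid.ofList t ∈ H.coeff.support
      · rw [if_pos hmem]
      · rw [if_neg hmem, Finsupp.notMem_support_iff.1 hmem, mul_zero]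
    · rw [if_neg hp, Finsupp.sum]
      apply Finset.sum_eq_zero
      intro b _
      rw [if_neg]
      intro hc
      apply hp
      refine ⟨b.toList, ?_⟩
      have := congrArg (fun z => FreeMonoid.toList z) hc
      simpa using this
  have step1 : (G * H) (FreeMonoid.ofList w) =
      ∑ a ∈ G.coeff.support, (if a.toList <+: w
        then G a * H (FreeMonoid.ofList (w.drop a.toList.length)) else 0) := by
    rw [MonoidAlgebra.mul_apply, Finsupp.sum]
    exact Finset.sum_congr rfl (fun a _ => inner a (G a))
  rw [step1]
  have outer : ∀ j ∈ Finset.range (w.length + 1),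
      G (FreeMonoid.ofList (w.take j)) * H (FreeMonoid.ofList (w.drop j)) =
      ∑ a ∈ G.coeff.support, if a = FreeMonoid.ofList (w.take j)
        then G a * H (FreeMonoid.ofList (w.drop j)) else 0 := by
    intro j _
    rw [Finset.sum_ite_eq' G.coeff.support (FreeMonoid.ofList (w.take j))
      (fun a => G a * H (FreeMonoid.ofList (w.drop j)))]
    by_cases hmem : FreeMonoid.ofList (w.take j) ∈ G.coeff.support
    · rw [if_pos hmem]
    · rw [if_neg hmem, Finsupp.notMem_support_iff.1 hmem, zero_mul]
  symm
  rw [Finset.sum_congr rfl outer, Finset.sum_comm]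
  apply Finset.sum_congr rfl
  intro a _
  by_cases hp : a.toList <+: w
  · rw [if_pos hp]
    have hlen : a.toList.length ≤ w.length := hp.length_le
    rw [Finset.sum_eq_single_of_mem a.toList.length (Finset.mem_range.2 (by omega))]
    · have hx : FreeMonoid.ofList (w.take a.toList.length) = a := by
        rw [← List.prefix_iff_eq_take.1 hp, FreeMonoid.ofList_toList]
      rw [if_pos hx.symm]
    · intro j hj hne
      rw [if_neg]
      intro hc
      apply hne
      have h2 : a.toList = w.take j := by
        have := congrArg (fun z => FreeMonoid.toList z) hc
        simpa using this
      rw [h2, List.length_take]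
      simp at hj
      omega
  · rw [if_neg hp]
    apply Finset.sum_eq_zero
    intro j _
    rw [if_neg]
    intro hc
    apply hp
    have h2 : a.toList = w.take j := by
      have := congrArg (fun z => FreeMonoid.toList z) hc
      simpa using this
    rw [h2]
    exact List.take_prefix _ _

end NCAux

namespace NCAux

/-- Leading-word lemma: for any multiplicative linear order (given by an
injective valuation), the product of the maximal words of `G` and `H` appears
in `G * H` with the product coefficient, and bounds the support of `G * H`. -/
lemma ext_max {F : Type*} [Field F] {W : Type*} [LinearOrder W] (val : List Bool → W)
    (hvinj : Function.Injective val)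
    (hr : ∀ {a b : List Bool} (c : List Bool), val a < val b → val (a ++ c) < val (b ++ c))
    (hl : ∀ (c : List Bool) {a b : List Bool}, val a < val b → val (c ++ a) < val (c ++ b))
    {G H : MonoidAlgebra F (FreeMonoid Bool)} (hG : G ≠ 0) (hH : H ≠ 0) :
    ∃ a b : List Bool, FreeMonoid.ofList a ∈ G.coeff.support ∧ FreeMonoid.ofList b ∈ H.coeff.support ∧
      (∀ a' ∈ G.coeff.support, val a'.toList ≤ val a) ∧ (∀ b' ∈ H.coeff.support, val b'.toList ≤ val b) ∧
      (G * H) (FreeMonoid.ofList (a ++ b)) = G (FreeMonoid.ofList a) * H (FreeMonoid.ofList b) ∧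
      (∀ w ∈ (G * H).coeff.support, val w.toList ≤ val (a ++ b)) := by
  have hr' : ∀ {x y : List Bool} (c : List Bool), val x ≤ val y → val (x ++ c) ≤ val (y ++ c) := by
    intro x y c h
    rcases lt_or_eq_of_le h with h' | h'
    · exact le_of_lt (hr c h')
    · rw [hvinj h']
  have hl' : ∀ (c : List Bool) {x y : List Bool}, val x ≤ val y → val (c ++ x) ≤ val (c ++ y) := by
    intro c x y h
    rcases lt_or_eq_of_le h with h' | h'
    · exact le_of_lt (hl c h')
    · rw [hvinj h']
  obtain ⟨a₀, ha₀, hamax⟩ := Finset.exists_max_image G.coeff.support (fun a => val a.toList)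
    (Finsupp.support_nonempty_iff.2 (mt MonoidAlgebra.coeff_eq_zero.1 hG))
  obtain ⟨b₀, hb₀, hbmax⟩ := Finset.exists_max_image H.coeff.support (fun b => val b.toList)
    (Finsupp.support_nonempty_iff.2 (mt MonoidAlgebra.coeff_eq_zero.1 hH))
  set a := a₀.toList with ha
  set b := b₀.toList with hb
  have hoa : FreeMonoid.ofList a = a₀ := FreeMonoid.ofList_toList a₀
  have hob : FreeMonoid.ofList b = b₀ := FreeMonoid.ofList_toList b₀
  refine ⟨a, b, hoa ▸ ha₀, hob ▸ hb₀, fun a' h' => hamax a' h', fun b' h' => hbmax b' h', ?_, ?_⟩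
  · rw [mul_coeff_eq_sum]
    have hmem : a.length ∈ Finset.range ((a ++ b).length + 1) := by
      simp [List.length_append]
    rw [Finset.sum_eq_single_of_mem a.length hmem]
    · rw [List.take_left, List.drop_left]
    · intro j hj hne
      by_contra hterm
      have hGm : FreeMonoid.ofList ((a ++ b).take j) ∈ G.coeff.support := by
        rw [Finsupp.mem_support_iff]
        intro h0
        rw [h0, zero_mul] at hterm
        exact hterm rfl
      have hHm : FreeMonoid.ofList ((a ++ b).drop j) ∈ H.coeff.support := by
        rw [Finsupp.mem_support_iff]
        intro h0
        rw [h0, mul_zero] at hterm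
        exact hterm rfl
      have h1 : val ((a ++ b).take j) ≤ val a := by
        have := hamax _ hGm
        simpa using this
      have h2 : val ((a ++ b).drop j) ≤ val b := by
        have := hbmax _ hHm
        simpa using this
      have heq : val ((a ++ b).take j ++ (a ++ b).drop j) = val (a ++ b) := by
        rw [List.take_append_drop]
      have hne2 : (a ++ b).take j ≠ a := by
        intro hcc
        apply hne
        have : ((a ++ b).take j).length = a.length := by rw [hcc]
        rw [List.length_take] at this
        simp at hj
        have hlen3 : (a ++ b).length = a.length + b.length := by simp
        omega
      have hlt1 : val ((a ++ b).take j) < val a :=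
        lt_of_le_of_ne h1 (fun hc => hne2 (hvinj hc))
      have : val ((a ++ b).take j ++ (a ++ b).drop j) < val (a ++ b) :=
        lt_of_lt_of_le (hr _ hlt1) (hl' a h2)
      rw [heq] at this
      exact lt_irrefl _ this
  · intro w hw
    have hw' : (G * H) (FreeMonoid.ofList w.toList) ≠ 0 := by
      rw [FreeMonoid.ofList_toList]
      exact Finsupp.mem_support_iff.1 hw
    rw [mul_coeff_eq_sum] at hw'
    obtain ⟨j, _, hterm⟩ := Finset.exists_ne_zero_of_sum_ne_zero hw'
    have hGm : FreeMonoid.ofList (w.toList.take j) ∈ G.coeff.support := by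
      rw [Finsupp.mem_support_iff]
      intro h0
      rw [h0, zero_mul] at hterm
      exact hterm rfl
    have hHm : FreeMonoid.ofList (w.toList.drop j) ∈ H.coeff.support := by
      rw [Finsupp.mem_support_iff]
      intro h0
      rw [h0, mul_zero] at hterm
      exact hterm rfl
    have h1 : val (w.toList.take j) ≤ val a := by simpa using hamax _ hGm
    have h2 : val (w.toList.drop j) ≤ val b := by simpa using hbmax _ hHm
    calc val w.toList = val (w.toList.take j ++ w.toList.drop j) := by
          rw [List.take_append_drop]
      _ ≤ val (a ++ w.toList.drop j) := hr' _ h1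
      _ ≤ val (a ++ b) := hl' a h2

end NCAux

namespace NCAux

variable {F : Type*} [Field F] {n : ℕ} (u : Fin n → List Bool)

/-- The variable assignment of the embedding. -/
def vmap : Fin n → MonoidAlgebra F (FreeMonoid Bool) := fun i =>
  MonoidAlgebra.of F (FreeMonoid Bool) (FreeMonoid.ofList (u i)) +
  MonoidAlgebra.of F (FreeMonoid Bool) (FreeMonoid.ofList ((u i).map not))

variable (hmb : ∀ i, MinBal (u i))

include hmb

open scoped Classical in
lemma phi_of_coeff (m : List (Fin n)) (w : List Bool) :
    (phiGen (vmap (F := F) u) (MonoidAlgebra.of F (FreeMonoid (Fin n)) (FreeMonoid.ofList m)))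
      (FreeMonoid.ofList w) = if IsS u m w then 1 else 0 := by
  induction m generalizing w with
  | nil =>
    have h1 : (FreeMonoid.ofList ([] : List (Fin n))) = 1 := rfl
    rw [h1, map_one, map_one, MonoidAlgebra.one_def, MonoidAlgebra.coeff_single, Finsupp.single_apply]
    have : ((1 : FreeMonoid Bool) = FreeMonoid.ofList w) ↔ IsS u [] w := by
      rw [isS_nil_iff]
      constructor
      · intro h
        have := congrArg (fun z => FreeMonoid.toList z) h
        simpa using this.symm
      · intro h; rw [h]; rfl
    rw [if_congr this rfl rfl]
  | cons i t ih =>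
    have h1 : (FreeMonoid.ofList (i :: t)) = FreeMonoid.of i * FreeMonoid.ofList t := rfl
    rw [h1, map_mul, map_mul]
    have h2 : phiGen (vmap (F := F) u) (MonoidAlgebra.of F (FreeMonoid (Fin n)) (FreeMonoid.of i))
        = vmap (F := F) u i := by
      rw [phiGen, MonoidAlgebra.lift_of, FreeMonoid.lift_eval_of]
    rw [h2]
    set Q := phiGen (vmap (F := F) u) (MonoidAlgebra.of F (FreeMonoid (Fin n)) (FreeMonoid.ofList t))
      with hQ
    have h3 : vmap (F := F) u i * Q =
        MonoidAlgebra.single (FreeMonoid.ofList (u i)) 1 * Q +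
        MonoidAlgebra.single (FreeMonoid.ofList ((u i).map not)) 1 * Q := by
      rw [vmap, MonoidAlgebra.of_apply, MonoidAlgebra.of_apply, add_mul]
    rw [h3, MonoidAlgebra.coeff_add, Finsupp.add_apply, single_mul_coeff, single_mul_coeff]
    obtain ⟨s₀, hs₀⟩ := mb_head (hmb i)
    have hexcl : ¬(u i <+: w ∧ (u i).map not <+: w) := by
      rintro ⟨⟨t1, ht1⟩, ⟨t2, ht2⟩⟩
      rw [← ht1] at ht2
      rw [hs₀] at ht2
      simp at ht2
    by_cases hp1 : u i <+: w
    · have hp2 : ¬ (u i).map not <+: w := fun hc => hexcl ⟨hp1, hc⟩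
      rw [if_pos hp1, if_neg hp2, ih, add_zero, one_mul]
      have : IsS u (i :: t) w ↔ IsS u t (w.drop (u i).length) := by
        constructor
        · rintro ⟨w', hw', hc | hc⟩
          · rw [hc]; simpa using hw'
          · exfalso; exact hp2 (hc ▸ ⟨w', rfl⟩)
        · intro h
          obtain ⟨t1, ht1⟩ := hp1
          refine ⟨t1, ?_, Or.inl ht1.symm⟩
          have : w.drop (u i).length = t1 := by rw [← ht1]; simp
          rwa [this] at h
      rw [if_congr this.symm rfl rfl]
    · rw [if_neg hp1, zero_add]
      by_cases hp2 : (u i).map not <+: w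
      · rw [if_pos hp2, ih, one_mul]
        have : IsS u (i :: t) w ↔ IsS u t (w.drop ((u i).map not).length) := by
          constructor
          · rintro ⟨w', hw', hc | hc⟩
            · exfalso; exact hp1 (hc ▸ ⟨w', rfl⟩)
            · rw [hc]; simpa using hw'
          · intro h
            obtain ⟨t1, ht1⟩ := hp2
            refine ⟨t1, ?_, Or.inr ht1.symm⟩
            have : w.drop ((u i).map not).length = t1 := by rw [← ht1]; simp
            rwa [this] at h
        rw [if_congr this.symm rfl rfl]
      · rw [if_neg hp2]
        have : ¬ IsS u (i :: t) w := by
          rintro ⟨w', _, hc | hc⟩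
          · exact hp1 (hc ▸ ⟨w', rfl⟩)
          · exact hp2 (hc ▸ ⟨w', rfl⟩)
        rw [if_neg this]

variable (hinj : Function.Injective u)

include hinj

/-- Coefficient formula for `φ f` at a signed word. -/
lemma phi_coeff_signed (f : MonoidAlgebra F (FreeMonoid (Fin n))) {m : List (Fin n)}
    {w : List Bool} (hs : IsS u m w) :
    (phiGen (vmap (F := F) u) f) (FreeMonoid.ofList w) = f (FreeMonoid.ofList m) := by
  classical
  rw [phiGen, MonoidAlgebra.lift_apply, Finsupp.sum, MonoidAlgebra.coeff_sum, Finsupp.finset_sum_apply]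
  have hterm : ∀ m' ∈ f.coeff.support,
      (f m' • FreeMonoid.lift (vmap (F := F) u) m') (FreeMonoid.ofList w)
        = if m' = FreeMonoid.ofList m then f m' else 0 := by
    intro m' _
    rw [MonoidAlgebra.coeff_smul_apply]
    have hofl : FreeMonoid.lift (vmap (F := F) u) m'
        = phiGen (vmap (F := F) u) (MonoidAlgebra.of F (FreeMonoid (Fin n))
            (FreeMonoid.ofList m'.toList)) := by
      rw [FreeMonoid.ofList_toList, phiGen, MonoidAlgebra.lift_of]
    rw [hofl, phi_of_coeff u hmb]
    by_cases hc : IsS u m'.toList w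
    · have : m'.toList = m := isS_unique u hmb hinj hc hs
      rw [if_pos, if_pos]
      · simp
      · rw [← this, FreeMonoid.ofList_toList]
      · exact hc
    · rw [if_neg hc, if_neg]
      · simp
      · intro he
        apply hc
        rw [he]
        simpa using hs
  rw [Finset.sum_congr rfl hterm, Finset.sum_ite_eq' f.coeff.support (FreeMonoid.ofList m) (fun x => f x)]
  by_cases hmem : FreeMonoid.ofList m ∈ f.coeff.support
  · rw [if_pos hmem]
  · rw [if_neg hmem, Finsupp.notMem_support_iff.1 hmem]

/-- Coefficient formula for `φ f` at an unsigned word. -/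
lemma phi_coeff_unsigned (f : MonoidAlgebra F (FreeMonoid (Fin n)))
    {w : List Bool} (hs : ∀ m, ¬ IsS u m w) :
    (phiGen (vmap (F := F) u) f) (FreeMonoid.ofList w) = 0 := by
  classical
  rw [phiGen, MonoidAlgebra.lift_apply, Finsupp.sum, MonoidAlgebra.coeff_sum, Finsupp.finset_sum_apply]
  apply Finset.sum_eq_zero
  intro m' _
  rw [MonoidAlgebra.coeff_smul_apply]
  have hofl : FreeMonoid.lift (vmap (F := F) u) m'
      = phiGen (vmap (F := F) u) (MonoidAlgebra.of F (FreeMonoid (Fin n))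
          (FreeMonoid.ofList m'.toList)) := by
    rw [FreeMonoid.ofList_toList, phiGen, MonoidAlgebra.lift_of]
  rw [hofl, phi_of_coeff u hmb, if_neg (hs m'.toList)]
  simp

end NCAux

namespace NCAux

def val1 (w : List Bool) : ℤ ×ₗ ℕ := toLex (imbL w, val2 w)

lemma val1_inj : Function.Injective val1 := by
  intro a b h
  have h2 : (imbL a, val2 a) = (imbL b, val2 b) := toLex.injective h
  exact val2_inj (congrArg Prod.snd h2)

lemma val1_lt_iff {a b : List Bool} :
    val1 a < val1 b ↔ imbL a < imbL b ∨ (imbL a = imbL b ∧ val2 a < val2 b) :=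
  Prod.Lex.lt_iff

lemma val1_append_right {a b : List Bool} (c : List Bool) (h : val1 a < val1 b) :
    val1 (a ++ c) < val1 (b ++ c) := by
  rw [val1_lt_iff] at h ⊢
  rcases h with h | ⟨h1, h2⟩
  · left; rw [imb_append, imb_append]; omega
  · right
    constructor
    · rw [imb_append, imb_append, h1]
    · exact val2_append_right c h2

lemma val1_append_left {a b : List Bool} (c : List Bool) (h : val1 a < val1 b) :
    val1 (c ++ a) < val1 (c ++ b) := by
  rw [val1_lt_iff] at h ⊢
  rcases h with h | ⟨h1, h2⟩
  · left; rw [imb_append, imb_append]; omega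
  · right
    constructor
    · rw [imb_append, imb_append, h1]
    · exact val2_append_left c h2

lemma imb_le_of_val1_le {a b : List Bool} (h : val1 a ≤ val1 b) : imbL a ≤ imbL b := by
  have := Prod.Lex.le_iff.1 h
  rcases this with h | ⟨h, _⟩
  · exact le_of_lt h
  · exact le_of_eq h

variable {F : Type*} [Field F] {n : ℕ} (u : Fin n → List Bool)
  (hmb : ∀ i, MinBal (u i)) (hinj : Function.Injective u)

include hmb hinj

/-- Step I: in a factorization of `φ f`, both factors are supported on
balanced words. -/
lemma supports_balanced (f : MonoidAlgebra F (FreeMonoid (Fin n)))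
    {G H : MonoidAlgebra F (FreeMonoid Bool)} (hG : G ≠ 0) (hH : H ≠ 0)
    (hfGH : phiGen (vmap (F := F) u) f = G * H) :
    (∀ w ∈ G.coeff.support, imbL w.toList = 0) ∧ (∀ w ∈ H.coeff.support, imbL w.toList = 0) := by
  classical
  have hPsig : ∀ w : List Bool, (G * H) (FreeMonoid.ofList w) ≠ 0 → ∃ m, IsS u m w := by
    intro w hw
    by_contra hc
    push_neg at hc
    rw [← hfGH] at hw
    exact hw (phi_coeff_unsigned u hmb hinj f hc)
  -- maximal/minimal words for the imbalance-first order
  obtain ⟨a₁, b₁, ha₁, hb₁, hamax, hbmax, hcoeff, _⟩ :=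
    ext_max (F := F) val1 val1_inj (fun c h => val1_append_right c h)
      (fun c _ _ h => val1_append_left c h) hG hH
  obtain ⟨a₀, b₀, ha₀, hb₀, hamin, hbmin, hcoeff₀, _⟩ :=
    ext_max (F := F) (fun w => OrderDual.toDual (val1 w))
      (fun x y hxy => val1_inj (OrderDual.toDual.injective hxy))
      (fun c h => OrderDual.toDual_lt_toDual.2 (val1_append_right c
        (OrderDual.toDual_lt_toDual.1 h)))
      (fun c _ _ h => OrderDual.toDual_lt_toDual.2 (val1_append_left c
        (OrderDual.toDual_lt_toDual.1 h))) hG hH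
  have hne1 : (G * H) (FreeMonoid.ofList (a₁ ++ b₁)) ≠ 0 := by
    rw [hcoeff]
    exact mul_ne_zero (Finsupp.mem_support_iff.1 ha₁) (Finsupp.mem_support_iff.1 hb₁)
  have hne0 : (G * H) (FreeMonoid.ofList (a₀ ++ b₀)) ≠ 0 := by
    rw [hcoeff₀]
    exact mul_ne_zero (Finsupp.mem_support_iff.1 ha₀) (Finsupp.mem_support_iff.1 hb₀)
  obtain ⟨m₁, hm₁⟩ := hPsig _ hne1
  obtain ⟨m₀, hm₀⟩ := hPsig _ hne0
  have h11 : imbL a₁ + imbL b₁ = 0 := by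
    have := isS_imb u hmb hm₁
    rw [imb_append] at this
    omega
  have h00 : imbL a₀ + imbL b₀ = 0 := by
    have := isS_imb u hmb hm₀
    rw [imb_append] at this
    omega
  have himba : ∀ w ∈ G.coeff.support, imbL w.toList = imbL a₁ := by
    intro w hw
    have h1 : imbL w.toList ≤ imbL a₁ := imb_le_of_val1_le (hamax w hw)
    have h2 : imbL a₀ ≤ imbL w.toList := imb_le_of_val1_le (hamin w hw)
    have h3 : imbL b₀ ≤ imbL b₁ := imb_le_of_val1_le (hbmax _ hb₀)
    have h4 : imbL a₀ ≤ imbL a₁ := imb_le_of_val1_le (hamax _ ha₀)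
    omega
  have himbb : ∀ w ∈ H.coeff.support, imbL w.toList = imbL b₁ := by
    intro w hw
    have h1 : imbL w.toList ≤ imbL b₁ := imb_le_of_val1_le (hbmax w hw)
    have h2 : imbL b₀ ≤ imbL w.toList := imb_le_of_val1_le (hbmin w hw)
    have h3 : imbL a₀ ≤ imbL a₁ := imb_le_of_val1_le (hamax _ ha₀)
    omega
  -- now show the common imbalance is 0 using the deg-lex order
  obtain ⟨A, Bb, hA, hB, hAmax, hBmax, hcoeffA, hboundA⟩ :=
    ext_max (F := F) val2 val2_inj (fun c h => val2_append_right c h)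
      (fun c _ _ h => val2_append_left c h) hG hH
  obtain ⟨A', B', hA', hB', hAmin, hBmin, hcoeffA', hboundA'⟩ :=
    ext_max (F := F) (fun w => OrderDual.toDual (val2 w))
      (fun x y hxy => val2_inj (OrderDual.toDual.injective hxy))
      (fun c h => OrderDual.toDual_lt_toDual.2 (val2_append_right c
        (OrderDual.toDual_lt_toDual.1 h)))
      (fun c _ _ h => OrderDual.toDual_lt_toDual.2 (val2_append_left c
        (OrderDual.toDual_lt_toDual.1 h))) hG hH
  have hneA : (G * H) (FreeMonoid.ofList (A ++ Bb)) ≠ 0 := by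
    rw [hcoeffA]
    exact mul_ne_zero (Finsupp.mem_support_iff.1 hA) (Finsupp.mem_support_iff.1 hB)
  have hneA' : (G * H) (FreeMonoid.ofList (A' ++ B')) ≠ 0 := by
    rw [hcoeffA']
    exact mul_ne_zero (Finsupp.mem_support_iff.1 hA') (Finsupp.mem_support_iff.1 hB')
  obtain ⟨mA, hmA⟩ := hPsig _ hneA
  obtain ⟨mA', hmA'⟩ := hPsig _ hneA'
  -- the maximal word of the product is the all-positive representative
  have hfA : f (FreeMonoid.ofList mA) ≠ 0 := by
    rw [← phi_coeff_signed u hmb hinj f hmA, hfGH]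
    exact hneA
  have hposmem : FreeMonoid.ofList (posW u mA) ∈ (G * H).coeff.support := by
    rw [Finsupp.mem_support_iff, ← hfGH,
      phi_coeff_signed u hmb hinj f (isS_posW u mA)]
    exact hfA
  have hub : val2 (posW u mA) ≤ val2 (A ++ Bb) := by
    have := hboundA _ hposmem
    simpa using this
  have hlb : val2 (A ++ Bb) ≤ val2 (posW u mA) := val2_le_posW u hmb hmA
  have hABpos : A ++ Bb = posW u mA := val2_inj (le_antisymm hlb hub)
  have hdpos : 0 ≤ imbL A := by
    apply posW_prefix_nonneg u hmb mA
    exact hABpos ▸ ⟨Bb, rfl⟩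
  -- the minimal word of the product is the all-negative representative
  have hfA' : f (FreeMonoid.ofList mA') ≠ 0 := by
    rw [← phi_coeff_signed u hmb hinj f hmA', hfGH]
    exact hneA'
  have hnegmem : FreeMonoid.ofList (negW u mA') ∈ (G * H).coeff.support := by
    rw [Finsupp.mem_support_iff, ← hfGH,
      phi_coeff_signed u hmb hinj f (isS_negW u mA')]
    exact hfA'
  have hub' : val2 (A' ++ B') ≤ val2 (negW u mA') := by
    have := hboundA' _ hnegmem
    simpa using this
  have hlb' : val2 (negW u mA') ≤ val2 (A' ++ B') := negW_le_val2 u hmb hmA'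
  have hABneg : A' ++ B' = negW u mA' := val2_inj (le_antisymm hub' hlb')
  have hdneg : imbL A' ≤ 0 := by
    apply negW_prefix_nonpos u hmb mA'
    exact hABneg ▸ ⟨B', rfl⟩
  have hdA : imbL A = imbL a₁ := by
    have := himba _ hA
    simpa using this
  have hdA' : imbL A' = imbL a₁ := by
    have := himba _ hA'
    simpa using this
  have hd0 : imbL a₁ = 0 := by omega
  constructor
  · intro w hw
    rw [himba w hw, hd0]
  · intro w hw
    rw [himbb w hw]
    omega

end NCAux

namespace NCAux

variable {F : Type*} [Field F] {n : ℕ} (u : Fin n → List Bool)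
  (hmb : ∀ i, MinBal (u i)) (hinj : Function.Injective u)

include hmb hinj

/-- Core induction, left factor: `G` vanishes off signed words and its
coefficients only depend on the index sequence. -/
lemma claim_G (f : MonoidAlgebra F (FreeMonoid (Fin n)))
    {G H : MonoidAlgebra F (FreeMonoid Bool)} (hH : H ≠ 0)
    (hfGH : phiGen (vmap (F := F) u) f = G * H)
    (hGbal : ∀ w ∈ G.coeff.support, imbL w.toList = 0) :
    ∀ w : List Bool,
      ((∀ m, ¬ IsS u m w) → G (FreeMonoid.ofList w) = 0) ∧
      (∀ (w' : List Bool) (m : List (Fin n)), IsS u m w → IsS u m w' →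
        G (FreeMonoid.ofList w) = G (FreeMonoid.ofList w')) := by
  classical
  have hGub : ∀ x : List Bool, imbL x ≠ 0 → G (FreeMonoid.ofList x) = 0 := by
    intro x hx
    by_contra h
    apply hx
    have := hGbal _ (Finsupp.mem_support_iff.2 h)
    simpa using this
  set B := G.coeff.support.sup (fun x => x.toList.length) with hB
  have hGlong : ∀ x : List Bool, B < x.length → G (FreeMonoid.ofList x) = 0 := by
    intro x hx
    by_contra h
    have := Finset.le_sup (f := fun x : FreeMonoid Bool => x.toList.length)
      (Finsupp.mem_support_iff.2 h)
    rw [← hB] at this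
    simp at this
    omega
  obtain ⟨v₀f, hv₀mem, hv₀max⟩ := Finset.exists_max_image H.coeff.support (fun b => val2 b.toList)
    (Finsupp.support_nonempty_iff.2 (mt MonoidAlgebra.coeff_eq_zero.1 hH))
  set v₀ := v₀f.toList with hv₀def
  have hv₀ne : H (FreeMonoid.ofList v₀) ≠ 0 := by
    rw [hv₀def, FreeMonoid.ofList_toList]
    exact Finsupp.mem_support_iff.1 hv₀mem
  have hHlong : ∀ x : List Bool, v₀.length < x.length → H (FreeMonoid.ofList x) = 0 := by
    intro x hx
    by_contra h
    have h1 := hv₀max _ (Finsupp.mem_support_iff.2 h)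
    have h2 := length_le_of_val2_le h1
    simp at h2
    omega
  -- the splitting identity
  have hident : ∀ x : List Bool, (G * H) (FreeMonoid.ofList (x ++ v₀)) =
      G (FreeMonoid.ofList x) * H (FreeMonoid.ofList v₀) +
      ∑ j ∈ (Finset.Icc x.length (x.length + v₀.length)).erase x.length,
        G (FreeMonoid.ofList (x ++ v₀.take (j - x.length))) *
        H (FreeMonoid.ofList (v₀.drop (j - x.length))) := by
    intro x
    rw [mul_coeff_eq_sum]
    have hsub : Finset.Icc x.length (x.length + v₀.length) ⊆
        Finset.range ((x ++ v₀).length + 1) := by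
      intro j hj
      simp [List.length_append]
      simp [Finset.mem_Icc] at hj
      omega
    have hvanish : ∀ j ∈ Finset.range ((x ++ v₀).length + 1),
        j ∉ Finset.Icc x.length (x.length + v₀.length) →
        G (FreeMonoid.ofList ((x ++ v₀).take j)) * H (FreeMonoid.ofList ((x ++ v₀).drop j)) = 0 := by
      intro j hj hj2
      simp [Finset.mem_Icc] at hj2
      simp [List.length_append] at hj
      have hjlt : j < x.length := by omega
      rw [hHlong ((x ++ v₀).drop j) (by simp [List.length_append]; omega), mul_zero]
    rw [← Finset.sum_subset hsub hvanish]
    have hcongr : ∀ j ∈ Finset.Icc x.length (x.length + v₀.length),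
        G (FreeMonoid.ofList ((x ++ v₀).take j)) * H (FreeMonoid.ofList ((x ++ v₀).drop j)) =
        G (FreeMonoid.ofList (x ++ v₀.take (j - x.length))) *
        H (FreeMonoid.ofList (v₀.drop (j - x.length))) := by
      intro j hj
      simp [Finset.mem_Icc] at hj
      have h1 : (x ++ v₀).take j = x ++ v₀.take (j - x.length) := by
        rw [List.take_append, List.take_of_length_le (by omega)]
      have h2 : (x ++ v₀).drop j = v₀.drop (j - x.length) := by
        rw [List.drop_append, List.drop_of_length_le (by omega)]
        simp
      rw [h1, h2]
    rw [Finset.sum_congr rfl hcongr]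
    rw [← Finset.add_sum_erase _ _
      (show x.length ∈ Finset.Icc x.length (x.length + v₀.length) by simp)]
    congr 1
    simp
  -- downward induction
  have czero : ∀ x : List Bool, B < x.length →
      ((∀ m, ¬ IsS u m x) → G (FreeMonoid.ofList x) = 0) ∧
      (∀ (x' : List Bool) (m : List (Fin n)), IsS u m x → IsS u m x' →
        G (FreeMonoid.ofList x) = G (FreeMonoid.ofList x')) := by
    intro x hx
    constructor
    · intro _; exact hGlong x hx
    · intro x' m hs hs'
      have hlen : x'.length = x.length := by
        rw [isS_length u hs', ← isS_length u hs]
      rw [hGlong x hx, hGlong x' (by omega)]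
  have main : ∀ t : ℕ, ∀ w : List Bool, B + 1 - w.length = t →
      ((∀ m, ¬ IsS u m w) → G (FreeMonoid.ofList w) = 0) ∧
      (∀ (w' : List Bool) (m : List (Fin n)), IsS u m w → IsS u m w' →
        G (FreeMonoid.ofList w) = G (FreeMonoid.ofList w')) := by
    intro t
    induction t using Nat.strong_induction_on with
    | _ t ih =>
    intro w hw
    by_cases hlong : B < w.length
    · exact czero w hlong
    push_neg at hlong
    have IH' : ∀ x : List Bool, w.length < x.length →
        ((∀ m, ¬ IsS u m x) → G (FreeMonoid.ofList x) = 0) ∧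
        (∀ (x' : List Bool) (m : List (Fin n)), IsS u m x → IsS u m x' →
          G (FreeMonoid.ofList x) = G (FreeMonoid.ofList x')) := by
      intro x hx
      by_cases hxB : B < x.length
      · exact czero x hxB
      · push_neg at hxB
        exact ih (B + 1 - x.length) (by omega) x rfl
    constructor
    · -- vanishing on unsigned words
      intro hunsig
      by_cases himb : imbL w = 0
      · have hP0 : (G * H) (FreeMonoid.ofList (w ++ v₀)) = 0 := by
          rw [← hfGH]
          apply phi_coeff_unsigned u hmb hinj
          intro M hM
          obtain ⟨m₁, m₂, _, hs1, _⟩ := isS_split u hmb hM himb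
          exact hunsig m₁ hs1
        have h2 := hident w
        rw [hP0] at h2
        have hrest : ∀ j ∈ (Finset.Icc w.length (w.length + v₀.length)).erase w.length,
            G (FreeMonoid.ofList (w ++ v₀.take (j - w.length))) *
            H (FreeMonoid.ofList (v₀.drop (j - w.length))) = 0 := by
          intro j hj
          simp [Finset.mem_erase, Finset.mem_Icc] at hj
          set p := v₀.take (j - w.length) with hp
          have hplen : p.length = j - w.length := by
            rw [hp, List.length_take]
            omega
          by_cases hpb : imbL p = 0
          · have hlen : w.length < (w ++ p).length := by
              simp [List.length_append]
              omega
            rw [(IH' (w ++ p) hlen).1, zero_mul]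
            intro M hM
            obtain ⟨m₁, m₂, _, hs1, _⟩ := isS_split u hmb hM himb
            exact hunsig m₁ hs1
          · rw [hGub (w ++ p) (by rw [imb_append]; omega), zero_mul]
        rw [Finset.sum_eq_zero hrest, add_zero] at h2
        rcases mul_eq_zero.1 h2.symm with h | h
        · exact h
        · exact absurd h hv₀ne
      · exact hGub w himb
    · -- type invariance
      intro w' m hsw hsw'
      have himbw : imbL w = 0 := isS_imb u hmb hsw
      have himbw' : imbL w' = 0 := isS_imb u hmb hsw'
      have hlenww' : w'.length = w.length := by
        rw [isS_length u hsw', ← isS_length u hsw]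
      have hPeq : (G * H) (FreeMonoid.ofList (w ++ v₀)) =
          (G * H) (FreeMonoid.ofList (w' ++ v₀)) := by
        by_cases hv : ∃ m₀, IsS u m₀ v₀
        · obtain ⟨m₀, hm₀⟩ := hv
          rw [← hfGH, phi_coeff_signed u hmb hinj f (isS_append u hsw hm₀),
            phi_coeff_signed u hmb hinj f (isS_append u hsw' hm₀)]
        · push_neg at hv
          rw [← hfGH, phi_coeff_unsigned u hmb hinj f, phi_coeff_unsigned u hmb hinj f]
          · intro M hM
            obtain ⟨m₁, m₂, _, _, hs2⟩ := isS_split u hmb hM (isS_imb u hmb hsw')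
            exact hv m₂ hs2
          · intro M hM
            obtain ⟨m₁, m₂, _, _, hs2⟩ := isS_split u hmb hM himbw
            exact hv m₂ hs2
      have h2 := hident w
      have h2' := hident w'
      rw [hlenww'] at h2'
      have hrest_eq : ∀ j ∈ (Finset.Icc w.length (w.length + v₀.length)).erase w.length,
          G (FreeMonoid.ofList (w ++ v₀.take (j - w.length))) *
          H (FreeMonoid.ofList (v₀.drop (j - w.length))) =
          G (FreeMonoid.ofList (w' ++ v₀.take (j - w.length))) *
          H (FreeMonoid.ofList (v₀.drop (j - w.length))) := by
        intro j hj
        simp [Finset.mem_erase, Finset.mem_Icc] at hj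
        set p := v₀.take (j - w.length) with hp
        have hplen : p.length = j - w.length := by
          rw [hp, List.length_take]
          omega
        have hlen1 : w.length < (w ++ p).length := by
          simp [List.length_append]
          omega
        have hlen2 : w.length < (w' ++ p).length := by
          simp [List.length_append]
          omega
        by_cases hpb : imbL p = 0
        · by_cases hps : ∃ mp, IsS u mp p
          · obtain ⟨mp, hmp⟩ := hps
            rw [(IH' (w ++ p) hlen1).2 (w' ++ p) (m ++ mp)
              (isS_append u hsw hmp) (isS_append u hsw' hmp)]
          · push_neg at hps
            rw [(IH' (w ++ p) hlen1).1, (IH' (w' ++ p) hlen2).1]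
            · intro M hM
              obtain ⟨m₁, m₂, _, _, hs2⟩ := isS_split u hmb hM (isS_imb u hmb hsw')
              exact hps m₂ hs2
            · intro M hM
              obtain ⟨m₁, m₂, _, _, hs2⟩ := isS_split u hmb hM himbw
              exact hps m₂ hs2
        · rw [hGub (w ++ p) (by rw [imb_append]; omega),
            hGub (w' ++ p) (by rw [imb_append]; omega)]
      rw [Finset.sum_congr rfl hrest_eq] at h2
      -- now cancel
      have hfin : G (FreeMonoid.ofList w) * H (FreeMonoid.ofList v₀) =
          G (FreeMonoid.ofList w') * H (FreeMonoid.ofList v₀) := by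
        have := h2.symm.trans (hPeq.trans h2')
        exact add_right_cancel this
      exact mul_right_cancel₀ hv₀ne hfin
  intro w
  exact main (B + 1 - w.length) w rfl

end NCAux

namespace NCAux

variable {F : Type*} [Field F] {n : ℕ} (u : Fin n → List Bool)
  (hmb : ∀ i, MinBal (u i)) (hinj : Function.Injective u)

include hmb hinj

/-- Core induction, right factor. -/
lemma claim_H (f : MonoidAlgebra F (FreeMonoid (Fin n)))
    {G H : MonoidAlgebra F (FreeMonoid Bool)} (hG : G ≠ 0)
    (hfGH : phiGen (vmap (F := F) u) f = G * H)
    (hGbal : ∀ w ∈ G.coeff.support, imbL w.toList = 0)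
    (hHbal : ∀ w ∈ H.coeff.support, imbL w.toList = 0)
    (hGsig : ∀ x : List Bool, G (FreeMonoid.ofList x) ≠ 0 → ∃ m, IsS u m x) :
    ∀ v : List Bool,
      ((∀ m, ¬ IsS u m v) → H (FreeMonoid.ofList v) = 0) ∧
      (∀ (v' : List Bool) (m : List (Fin n)), IsS u m v → IsS u m v' →
        H (FreeMonoid.ofList v) = H (FreeMonoid.ofList v')) := by
  classical
  have hHub : ∀ x : List Bool, imbL x ≠ 0 → H (FreeMonoid.ofList x) = 0 := by
    intro x hx
    by_contra h
    apply hx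
    have := hHbal _ (Finsupp.mem_support_iff.2 h)
    simpa using this
  have hGub' : ∀ x : List Bool, imbL x ≠ 0 → G (FreeMonoid.ofList x) = 0 := by
    intro x hx
    by_contra h
    apply hx
    have := hGbal _ (Finsupp.mem_support_iff.2 h)
    simpa using this
  set B := H.coeff.support.sup (fun x => x.toList.length) with hB
  have hHlong : ∀ x : List Bool, B < x.length → H (FreeMonoid.ofList x) = 0 := by
    intro x hx
    by_contra h
    have := Finset.le_sup (f := fun x : FreeMonoid Bool => x.toList.length)
      (Finsupp.mem_support_iff.2 h)
    rw [← hB] at this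
    simp at this
    omega
  obtain ⟨w₀f, hw₀mem, hw₀max⟩ := Finset.exists_max_image G.coeff.support (fun b => val2 b.toList)
    (Finsupp.support_nonempty_iff.2 (mt MonoidAlgebra.coeff_eq_zero.1 hG))
  set w₀ := w₀f.toList with hw₀def
  have hw₀ne : G (FreeMonoid.ofList w₀) ≠ 0 := by
    rw [hw₀def, FreeMonoid.ofList_toList]
    exact Finsupp.mem_support_iff.1 hw₀mem
  have himbw₀ : imbL w₀ = 0 := by
    have := hGbal _ hw₀mem
    simpa using this
  obtain ⟨m₀, hm₀⟩ := hGsig w₀ hw₀ne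
  have hGlong : ∀ x : List Bool, w₀.length < x.length → G (FreeMonoid.ofList x) = 0 := by
    intro x hx
    by_contra h
    have h1 := hw₀max _ (Finsupp.mem_support_iff.2 h)
    have h2 := length_le_of_val2_le h1
    simp at h2
    omega
  have hident : ∀ x : List Bool, (G * H) (FreeMonoid.ofList (w₀ ++ x)) =
      G (FreeMonoid.ofList w₀) * H (FreeMonoid.ofList x) +
      ∑ j ∈ Finset.range w₀.length,
        G (FreeMonoid.ofList (w₀.take j)) * H (FreeMonoid.ofList (w₀.drop j ++ x)) := by
    intro x
    rw [mul_coeff_eq_sum]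
    have hsub : Finset.range (w₀.length + 1) ⊆ Finset.range ((w₀ ++ x).length + 1) := by
      apply Finset.range_subset_range.2
      simp [List.length_append]
    have hvanish : ∀ j ∈ Finset.range ((w₀ ++ x).length + 1),
        j ∉ Finset.range (w₀.length + 1) →
        G (FreeMonoid.ofList ((w₀ ++ x).take j)) * H (FreeMonoid.ofList ((w₀ ++ x).drop j)) = 0 := by
      intro j hj hj2
      simp at hj hj2
      rw [hGlong ((w₀ ++ x).take j) (by
        rw [List.length_take, List.length_append]
        omega), zero_mul]
    rw [← Finset.sum_subset hsub hvanish]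
    have hcongr : ∀ j ∈ Finset.range (w₀.length + 1),
        G (FreeMonoid.ofList ((w₀ ++ x).take j)) * H (FreeMonoid.ofList ((w₀ ++ x).drop j)) =
        G (FreeMonoid.ofList (w₀.take j)) * H (FreeMonoid.ofList (w₀.drop j ++ x)) := by
      intro j hj
      simp at hj
      have h1 : (w₀ ++ x).take j = w₀.take j := by
        rw [List.take_append, Nat.sub_eq_zero_of_le (by omega)]
        simp
      have h2 : (w₀ ++ x).drop j = w₀.drop j ++ x := by
        rw [List.drop_append, Nat.sub_eq_zero_of_le (by omega)]
        simp
      rw [h1, h2]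
    rw [Finset.sum_congr rfl hcongr, Finset.range_add_one,
      Finset.sum_insert (by simp)]
    simp
  have czero : ∀ x : List Bool, B < x.length →
      ((∀ m, ¬ IsS u m x) → H (FreeMonoid.ofList x) = 0) ∧
      (∀ (x' : List Bool) (m : List (Fin n)), IsS u m x → IsS u m x' →
        H (FreeMonoid.ofList x) = H (FreeMonoid.ofList x')) := by
    intro x hx
    constructor
    · intro _; exact hHlong x hx
    · intro x' m hs hs'
      have hlen : x'.length = x.length := by
        rw [isS_length u hs', ← isS_length u hs]
      rw [hHlong x hx, hHlong x' (by omega)]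
  have main : ∀ t : ℕ, ∀ v : List Bool, B + 1 - v.length = t →
      ((∀ m, ¬ IsS u m v) → H (FreeMonoid.ofList v) = 0) ∧
      (∀ (v' : List Bool) (m : List (Fin n)), IsS u m v → IsS u m v' →
        H (FreeMonoid.ofList v) = H (FreeMonoid.ofList v')) := by
    intro t
    induction t using Nat.strong_induction_on with
    | _ t ih =>
    intro v hv
    by_cases hlong : B < v.length
    · exact czero v hlong
    push_neg at hlong
    have IH' : ∀ x : List Bool, v.length < x.length →
        ((∀ m, ¬ IsS u m x) → H (FreeMonoid.ofList x) = 0) ∧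
        (∀ (x' : List Bool) (m : List (Fin n)), IsS u m x → IsS u m x' →
          H (FreeMonoid.ofList x) = H (FreeMonoid.ofList x')) := by
      intro x hx
      by_cases hxB : B < x.length
      · exact czero x hxB
      · push_neg at hxB
        exact ih (B + 1 - x.length) (by omega) x rfl
    constructor
    · intro hunsig
      by_cases himb : imbL v = 0
      · have hP0 : (G * H) (FreeMonoid.ofList (w₀ ++ v)) = 0 := by
          rw [← hfGH]
          apply phi_coeff_unsigned u hmb hinj
          intro M hM
          obtain ⟨m₁, m₂, _, _, hs2⟩ := isS_split u hmb hM himbw₀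
          exact hunsig m₂ hs2
        have h2 := hident v
        rw [hP0] at h2
        have hrest : ∀ j ∈ Finset.range w₀.length,
            G (FreeMonoid.ofList (w₀.take j)) * H (FreeMonoid.ofList (w₀.drop j ++ v)) = 0 := by
          intro j hj
          simp at hj
          by_cases htb : imbL (w₀.take j) = 0
          · have hdb : imbL (w₀.drop j) = 0 := by
              have := himbw₀
              rw [← List.take_append_drop j w₀, imb_append] at this
              omega
            have hlen : v.length < (w₀.drop j ++ v).length := by
              simp [List.length_append, List.length_drop]
              omega
            rw [(IH' (w₀.drop j ++ v) hlen).1, mul_zero]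
            intro M hM
            obtain ⟨m₁, m₂, _, _, hs2⟩ := isS_split u hmb hM hdb
            exact hunsig m₂ hs2
          · rw [hGub' (w₀.take j) htb, zero_mul]
        rw [Finset.sum_eq_zero hrest, add_zero] at h2
        rcases mul_eq_zero.1 h2.symm with h | h
        · exact absurd h hw₀ne
        · exact h
      · exact hHub v himb
    · intro v' m hsv hsv'
      have himbv : imbL v = 0 := isS_imb u hmb hsv
      have himbv' : imbL v' = 0 := isS_imb u hmb hsv'
      have hPeq : (G * H) (FreeMonoid.ofList (w₀ ++ v)) =
          (G * H) (FreeMonoid.ofList (w₀ ++ v')) := by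
        rw [← hfGH, phi_coeff_signed u hmb hinj f (isS_append u hm₀ hsv),
          phi_coeff_signed u hmb hinj f (isS_append u hm₀ hsv')]
      have h2 := hident v
      have h2' := hident v'
      have hrest_eq : ∀ j ∈ Finset.range w₀.length,
          G (FreeMonoid.ofList (w₀.take j)) * H (FreeMonoid.ofList (w₀.drop j ++ v)) =
          G (FreeMonoid.ofList (w₀.take j)) * H (FreeMonoid.ofList (w₀.drop j ++ v')) := by
        intro j hj
        simp at hj
        by_cases htb : imbL (w₀.take j) = 0
        · have hsplit : IsS u m₀ (w₀.take j ++ w₀.drop j) := by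
            rw [List.take_append_drop]
            exact hm₀
          obtain ⟨m₁, m₂, _, _, hs2⟩ := isS_split u hmb hsplit htb
          have hlen : v.length < (w₀.drop j ++ v).length := by
            simp [List.length_append, List.length_drop]
            omega
          rw [(IH' (w₀.drop j ++ v) hlen).2 (w₀.drop j ++ v') (m₂ ++ m)
            (isS_append u hs2 hsv) (isS_append u hs2 hsv')]
        · rw [hGub' (w₀.take j) htb, zero_mul, zero_mul]
      rw [Finset.sum_congr rfl hrest_eq] at h2
      have hfin : G (FreeMonoid.ofList w₀) * H (FreeMonoid.ofList v) =
          G (FreeMonoid.ofList w₀) * H (FreeMonoid.ofList v') := by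
        have := h2.symm.trans (hPeq.trans h2')
        exact add_right_cancel this
      exact mul_left_cancel₀ hw₀ne hfin
  intro v
  exact main (B + 1 - v.length) v rfl

end NCAux

namespace NCAux

variable {F : Type*} [Field F] {n : ℕ} (u : Fin n → List Bool)

open scoped Classical in
/-- The index sequence of a signed word (junk value on unsigned words). -/
noncomputable def tyF (w : List Bool) : List (Fin n) :=
  if h : ∃ m, IsS u m w then h.choose else []

lemma tyF_eq (hmb : ∀ i, MinBal (u i)) (hinj : Function.Injective u)
    {m : List (Fin n)} {w : List Bool} (hs : IsS u m w) : tyF u w = m := by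
  rw [tyF, dif_pos ⟨m, hs⟩]
  exact isS_unique u hmb hinj (Exists.choose_spec (⟨m, hs⟩ : ∃ m, IsS u m w)) hs

open scoped Classical in
/-- The preimage polynomial of a factor. -/
noncomputable def extract (hmb : ∀ i, MinBal (u i)) (hinj : Function.Injective u)
    (G : MonoidAlgebra F (FreeMonoid Bool)) : MonoidAlgebra F (FreeMonoid (Fin n)) :=
  MonoidAlgebra.ofCoeff <| Finsupp.onFinset (G.coeff.support.image (fun w => FreeMonoid.ofList (tyF u w.toList)))
    (fun m => G (FreeMonoid.ofList (posW u m.toList)))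
    (fun m hm => by
      refine Finset.mem_image.2 ⟨FreeMonoid.ofList (posW u m.toList),
        Finsupp.mem_support_iff.2 hm, ?_⟩
      rw [FreeMonoid.toList_ofList, tyF_eq u hmb hinj (isS_posW u m.toList),
        FreeMonoid.ofList_toList])

lemma extract_apply (hmb : ∀ i, MinBal (u i)) (hinj : Function.Injective u)
    (G : MonoidAlgebra F (FreeMonoid Bool)) (m : List (Fin n)) :
    extract u hmb hinj G (FreeMonoid.ofList m) = G (FreeMonoid.ofList (posW u m)) := by
  rw [extract, MonoidAlgebra.coeff_ofCoeff, Finsupp.onFinset_apply, FreeMonoid.toList_ofList]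

variable (hmb : ∀ i, MinBal (u i)) (hinj : Function.Injective u)

include hmb hinj

lemma phi_inj : Function.Injective (phiGen (vmap (F := F) u)) := by
  intro p q h
  apply MonoidAlgebra.ext
  apply Finsupp.ext
  intro mf
  have h1 := congrArg (fun z : MonoidAlgebra F (FreeMonoid Bool) =>
    z (FreeMonoid.ofList (posW u mf.toList))) h
  simp only [phi_coeff_signed u hmb hinj p (isS_posW u mf.toList),
    phi_coeff_signed u hmb hinj q (isS_posW u mf.toList)] at h1
  simpa using h1

lemma phi_extract {G : MonoidAlgebra F (FreeMonoid Bool)}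
    (hC : ∀ w : List Bool,
      ((∀ m, ¬ IsS u m w) → G (FreeMonoid.ofList w) = 0) ∧
      (∀ (w' : List Bool) (m : List (Fin n)), IsS u m w → IsS u m w' →
        G (FreeMonoid.ofList w) = G (FreeMonoid.ofList w'))) :
    phiGen (vmap (F := F) u) (extract u hmb hinj G) = G := by
  apply MonoidAlgebra.ext
  apply Finsupp.ext
  intro x
  have hx : x = FreeMonoid.ofList x.toList := (FreeMonoid.ofList_toList x).symm
  rw [hx]
  by_cases hs : ∃ m, IsS u m x.toList
  · obtain ⟨m, hm⟩ := hs
    rw [phi_coeff_signed u hmb hinj _ hm, extract_apply]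
    exact (hC (posW u m)).2 x.toList m (isS_posW u m) hm
  · push_neg at hs
    rw [phi_coeff_unsigned u hmb hinj _ hs, ((hC x.toList).1 hs).symm]

omit hmb hinj in
lemma ncDeg_pos_iff {X : Type*} (f : MonoidAlgebra F (FreeMonoid X)) :
    0 < ncDeg f ↔ ∃ w ∈ f.coeff.support, w.toList ≠ [] := by
  rw [ncDeg, Finset.lt_sup_iff]
  constructor
  · rintro ⟨b, hb, h⟩
    refine ⟨b, hb, ?_⟩
    intro hnil
    have : b.length = 0 := by
      show b.toList.length = 0
      rw [hnil]
      rfl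
    omega
  · rintro ⟨b, hb, h⟩
    refine ⟨b, hb, ?_⟩
    show 0 < b.toList.length
    cases hbt : b.toList with
    | nil => exact absurd hbt h
    | cons c t => simp

omit hmb hinj in
lemma posW_ne_nil {m : List (Fin n)} (hmb2 : ∀ i, MinBal (u i)) (hm : m ≠ []) :
    posW u m ≠ [] := by
  cases m with
  | nil => exact absurd rfl hm
  | cons i t =>
    have : posW u (i :: t) = u i ++ posW u t := by simp [posW]
    rw [this]
    have := (hmb2 i).1
    intro hc
    simp at hc
    exact this hc.1

/-- The image of a positive-degree polynomial has positive degree. -/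
lemma ncDeg_phi_pos {g : MonoidAlgebra F (FreeMonoid (Fin n))} (hg : 0 < ncDeg g) :
    0 < ncDeg (phiGen (vmap (F := F) u) g) := by
  obtain ⟨mf, hmem, hne⟩ := (ncDeg_pos_iff g).1 hg
  rw [ncDeg_pos_iff]
  refine ⟨FreeMonoid.ofList (posW u mf.toList), ?_, ?_⟩
  · rw [Finsupp.mem_support_iff, phi_coeff_signed u hmb hinj g (isS_posW u mf.toList)]
    rw [FreeMonoid.ofList_toList]
    exact Finsupp.mem_support_iff.1 hmem
  · rw [FreeMonoid.toList_ofList]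
    exact posW_ne_nil u hmb hne

/-- Main descent: a factorization of `φ f` into positive-degree factors comes
from a factorization of `f`. -/
lemma factor_descend (f : MonoidAlgebra F (FreeMonoid (Fin n)))
    {G H : MonoidAlgebra F (FreeMonoid Bool)}
    (hfGH : phiGen (vmap (F := F) u) f = G * H)
    (hdG : 0 < ncDeg G) (hdH : 0 < ncDeg H) :
    ∃ g h : MonoidAlgebra F (FreeMonoid (Fin n)),
      0 < ncDeg g ∧ 0 < ncDeg h ∧ f = g * h := by
  have hGne : G ≠ 0 := by
    intro h
    rw [h] at hdG
    simp [ncDeg] at hdG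
  have hHne : H ≠ 0 := by
    intro h
    rw [h] at hdH
    simp [ncDeg] at hdH
  obtain ⟨hGbal, hHbal⟩ := supports_balanced u hmb hinj f hGne hHne hfGH
  have CG := claim_G u hmb hinj f hHne hfGH hGbal
  have hGsig : ∀ x : List Bool, G (FreeMonoid.ofList x) ≠ 0 → ∃ m, IsS u m x := by
    intro x hx
    by_contra hc
    push_neg at hc
    exact hx ((CG x).1 hc)
  have CH := claim_H u hmb hinj f hGne hfGH hGbal hHbal hGsig
  have hHsig : ∀ x : List Bool, H (FreeMonoid.ofList x) ≠ 0 → ∃ m, IsS u m x := by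
    intro x hx
    by_contra hc
    push_neg at hc
    exact hx ((CH x).1 hc)
  refine ⟨extract u hmb hinj G, extract u hmb hinj H, ?_, ?_, ?_⟩
  · -- positive degree of g
    obtain ⟨wf, hmem, hne⟩ := (ncDeg_pos_iff G).1 hdG
    have hwne : G (FreeMonoid.ofList wf.toList) ≠ 0 := by
      rw [FreeMonoid.ofList_toList]
      exact Finsupp.mem_support_iff.1 hmem
    obtain ⟨m, hm⟩ := hGsig _ hwne
    have hmne : m ≠ [] := by
      intro hc
      rw [hc, isS_nil_iff] at hm
      exact hne hm
    rw [ncDeg_pos_iff]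
    refine ⟨FreeMonoid.ofList m, ?_, by simpa using hmne⟩
    rw [Finsupp.mem_support_iff, extract_apply]
    rw [(CG (posW u m)).2 wf.toList m (isS_posW u m) hm]
    exact hwne
  · obtain ⟨wf, hmem, hne⟩ := (ncDeg_pos_iff H).1 hdH
    have hwne : H (FreeMonoid.ofList wf.toList) ≠ 0 := by
      rw [FreeMonoid.ofList_toList]
      exact Finsupp.mem_support_iff.1 hmem
    obtain ⟨m, hm⟩ := hHsig _ hwne
    have hmne : m ≠ [] := by
      intro hc
      rw [hc, isS_nil_iff] at hm
      exact hne hm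
    rw [ncDeg_pos_iff]
    refine ⟨FreeMonoid.ofList m, ?_, by simpa using hmne⟩
    rw [Finsupp.mem_support_iff, extract_apply]
    rw [(CH (posW u m)).2 wf.toList m (isS_posW u m) hm]
    exact hwne
  · apply phi_inj u hmb hinj
    rw [map_mul, phi_extract u hmb hinj CG, phi_extract u hmb hinj CH, hfGH]

end NCAux


/-- Under the embedding `φ : x_i ↦ u_i + ū_i` (`u_i` distinct minimally balanced
words, `ū_i` their letter-swaps), a polynomial `f` of positive degree is
irreducible in `F⟨x₁,…,xₙ⟩` if and only if `φ(f)` is irreducible in `F⟨x,y⟩`. -/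
theorem irreducible_iff_image_irreducible (F : Type*) [Field F] (n : ℕ)
    (u : Fin n → List Bool) (hinj : Function.Injective u) (hmb : ∀ i, MinBal (u i))
    (f : MonoidAlgebra F (FreeMonoid (Fin n))) (hf : 0 < ncDeg f) :
    NCIrreducible f ↔
      NCIrreducible (phiGen (F := F) (fun i : Fin n =>
        MonoidAlgebra.of F (FreeMonoid Bool) (FreeMonoid.ofList (u i)) +
        MonoidAlgebra.of F (FreeMonoid Bool) (FreeMonoid.ofList ((u i).map not))) f) := by
  have hv : (fun i : Fin n =>
      MonoidAlgebra.of F (FreeMonoid Bool) (FreeMonoid.ofList (u i)) +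
      MonoidAlgebra.of F (FreeMonoid Bool) (FreeMonoid.ofList ((u i).map not)))
      = NCAux.vmap (F := F) u := rfl
  rw [hv]
  constructor
  · intro hirr hex
    obtain ⟨G, H, hdG, hdH, heq⟩ := hex
    obtain ⟨g, h, hg, hh, hfgh⟩ := NCAux.factor_descend u hmb hinj f heq hdG hdH
    exact hirr ⟨g, h, hg, hh, hfgh⟩
  · intro hirr hex
    obtain ⟨g, h, hg, hh, hfgh⟩ := hex
    exact hirr ⟨phiGen (NCAux.vmap (F := F) u) g, phiGen (NCAux.vmap (F := F) u) h,
      NCAux.ncDeg_phi_pos u hmb hinj hg, NCAux.ncDeg_phi_pos u hmb hinj hh,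
      by rw [hfgh, map_mul]⟩
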